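/- Let q : ℤ → ℝ be a bounded sequence and h ∈ ℓ¹(ℤ) with decomposition h = h_T + h_{T^C} for T ⊂ ℤ. Suppose q[k] = sgn(h_T[k]) for all k ∈ T with h_T[k] ≠ 0, |q[k]| ≤ 1 for all k ∈ T, and |q[k]| ≤ ρ < 1 for all k ∉ T. Then |∑_{k ∈ ℤ} q[k] h[k]| ≥ ‖h_T‖₁ − ρ ‖h_{T^C}‖₁. -/

import Mathlib

theorem dual_certificate_pairing_lower_bound (q h : ℤ → ℝ) (T : Set ℤ) (ρ : ℝ)
    (hρ : ρ < 1) (hh : Summable fun k => |h k|)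
    (hqT : ∀ k ∈ T, |q k| ≤ 1)
    (hsgn : ∀ k ∈ T, h k ≠ 0 → q k = Real.sign (h k))
    (hqTc : ∀ k ∉ T, |q k| ≤ ρ) :
    |∑' k : ℤ, q k * h k| ≥
      (∑' k : ℤ, |T.indicator h k|) - ρ * ∑' k : ℤ, |Tᶜ.indicator h k| := by
  set f : ℤ → ℝ := fun k => q k * T.indicator h k with hf
  set g : ℤ → ℝ := fun k => q k * Tᶜ.indicator h k with hg
  have hsplit : ∀ k, q k * h k = f k + g k := by
    intro k
    simp [hf, hg, ← mul_add, Set.indicator_self_add_compl_apply]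
  have hfeq : ∀ k, f k = |T.indicator h k| := by
    intro k
    by_cases hk : k ∈ T
    · by_cases h0 : h k = 0
      · simp [hf, Set.indicator_apply, hk, h0]
      · have := hsgn k hk h0
        rcases lt_or_gt_of_ne h0 with hlt | hgt
        · simp [hf, Set.indicator_apply, hk, this, Real.sign_of_neg hlt,
            abs_of_neg hlt]
        · simp [hf, Set.indicator_apply, hk, this, Real.sign_of_pos hgt,
            abs_of_pos hgt]
    · simp [hf, Set.indicator_apply, hk]
  have hgb : ∀ k, |g k| ≤ ρ * |Tᶜ.indicator h k| := by
    intro k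
    by_cases hk : k ∈ T
    · simp [hg, Set.indicator_apply, hk]
    · have hq := hqTc k hk
      calc |g k| = |q k| * |Tᶜ.indicator h k| := abs_mul _ _
        _ ≤ ρ * |Tᶜ.indicator h k| :=
          mul_le_mul_of_nonneg_right hq (abs_nonneg _)
  have hfs : Summable fun k => |T.indicator h k| :=
    hh.of_nonneg_of_le (fun k => abs_nonneg _)
      (fun k => by
        by_cases hk : k ∈ T <;> simp [Set.indicator_apply, hk, abs_nonneg])
  have hgs' : Summable fun k => |Tᶜ.indicator h k| :=
    hh.of_nonneg_of_le (fun k => abs_nonneg _)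
      (fun k => by
        by_cases hk : k ∈ Tᶜ <;> simp [Set.indicator_apply, hk, abs_nonneg])
  have hgs : Summable g := by
    apply (hgs'.mul_left ρ).of_norm_bounded hgb
  have hfs2 : Summable f := by
    rw [show f = fun k => |T.indicator h k| from funext hfeq]
    exact hfs
  have htsum : ∑' k : ℤ, q k * h k = (∑' k, f k) + ∑' k, g k := by
    rw [← Summable.tsum_add hfs2 hgs]
    exact tsum_congr hsplit
  have hfA : ∑' k, f k = ∑' k : ℤ, |T.indicator h k| := tsum_congr hfeq
  have hgB : |∑' k, g k| ≤ ρ * ∑' k : ℤ, |Tᶜ.indicator h k| := by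
    calc |∑' k, g k| ≤ ∑' k, |g k| := by
          have := norm_tsum_le_tsum_norm (f := g)
            (by simpa [Real.norm_eq_abs] using hgs.abs)
          simpa [Real.norm_eq_abs] using this
      _ ≤ ∑' k, ρ * |Tᶜ.indicator h k| := Summable.tsum_le_tsum hgb hgs.abs (hgs'.mul_left ρ)
      _ = ρ * ∑' k : ℤ, |Tᶜ.indicator h k| := tsum_mul_left
  rw [htsum, hfA]
  have h1 : (∑' k : ℤ, |T.indicator h k|) - ρ * ∑' k : ℤ, |Tᶜ.indicator h k|
      ≤ (∑' k : ℤ, |T.indicator h k|) + ∑' k, g k := by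
    have := neg_abs_le (∑' k, g k)
    linarith
  have h2 : (∑' k : ℤ, |T.indicator h k|) + ∑' k, g k
      ≤ |(∑' k : ℤ, |T.indicator h k|) + ∑' k, g k| := le_abs_self _
  linarith
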